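/- Let N ≥ 1, let λ₁, …, λ_N be distinct complex numbers, and let P₁, …, P_N ∈ Matrix n n ℂ satisfy P_l·P_m = 0 for l ≠ m, P_l·P_l = P_l, and Σ_{l=1}^N P_l = 1. Set A = Σ_{l=1}^N λ_l·P_l. Fix k ∈ {1, …, N} and ε > 0 such that |λ_l − λ_k| > ε for all l ≠ k. Then for every z with |z − λ_k| = ε the matrix z·1 − A is invertible, and for every μ ∈ ℂ: (a) if |μ − λ_k| > ε, then (2πi)⁻¹ · ∮_{|z−λ_k|=ε} (z − μ)⁻¹ · (z·1 − A)⁻¹ dz = (λ_k − μ)⁻¹ · P_k; (b) if |μ − λ_k| < ε and μ ≠ λ_l for every l, then (2πi)⁻¹ · ∮_{|z−λ_k|=ε} (z − μ)⁻¹ · (z·1 − A)⁻¹ dz = Σ_{l ≠ k} (μ − λ_l)⁻¹ · P_l. -/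

import Mathlib

open Metric Real Complex
open scoped Classical

lemma circleInt_inv_outside {c w : ℂ} {R : ℝ} (hR : 0 ≤ R)
    (hw : w ∉ Metric.closedBall c R) : (∮ z in C(c, R), (z - w)⁻¹) = 0 := by
  refine circleIntegral_eq_zero_of_differentiable_on_off_countable hR
    Set.countable_empty ?_ ?_
  · intro z hz
    have hzw : z ≠ w := by rintro rfl; exact hw hz
    exact ((continuousAt_id.sub continuousAt_const).inv₀
      (sub_ne_zero.2 hzw)).continuousWithinAt
  · intro z hz
    have hzw : z ≠ w := by rintro rfl; exact hw (Metric.ball_subset_closedBall hz.1)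
    exact ((differentiableAt_id.sub_const w).inv (sub_ne_zero.2 hzw))

lemma circleInt_inv {c w : ℂ} {R : ℝ} (hR : 0 < R) (hw : w ∉ Metric.sphere c R) :
    (∮ z in C(c, R), (z - w)⁻¹) =
      (if w ∈ Metric.ball c R then (2 * π * Complex.I : ℂ) else 0) := by
  by_cases h : w ∈ Metric.ball c R
  · rw [if_pos h, circleIntegral.integral_sub_inv_of_mem_ball h]
  · rw [if_neg h]
    refine circleInt_inv_outside hR.le ?_
    intro hcb
    rcases lt_or_eq_of_le (Metric.mem_closedBall.1 hcb) with h' | h'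
    · exact h h'
    · exact hw h'

lemma circleInt_key {c w v : ℂ} {R : ℝ} (hR : 0 < R) (hwv : w ≠ v)
    (hw : w ∉ Metric.sphere c R) (hv : v ∉ Metric.sphere c R) :
    (∮ z in C(c, R), (z - w)⁻¹ * (z - v)⁻¹) =
      (w - v)⁻¹ * ((if w ∈ Metric.ball c R then (2 * π * Complex.I : ℂ) else 0) -
        (if v ∈ Metric.ball c R then (2 * π * Complex.I : ℂ) else 0)) := by
  have h1 : Set.EqOn (fun z => (z - w)⁻¹ * (z - v)⁻¹)
      (fun z => (w - v)⁻¹ * ((z - w)⁻¹ - (z - v)⁻¹)) (Metric.sphere c R) := by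
    intro z hz
    have hzw : (z - w) ≠ 0 := sub_ne_zero.2 (by rintro rfl; exact hw hz)
    have hzv : (z - v) ≠ 0 := sub_ne_zero.2 (by rintro rfl; exact hv hz)
    have hwv' : (w - v) ≠ 0 := sub_ne_zero.2 hwv
    field_simp
    ring
  have hiw : CircleIntegrable (fun z => (z - w)⁻¹) c R :=
    (circleIntegrable_sub_inv_iff).2 (Or.inr (by rwa [abs_of_pos hR]))
  have hiv : CircleIntegrable (fun z => (z - v)⁻¹) c R :=
    (circleIntegrable_sub_inv_iff).2 (Or.inr (by rwa [abs_of_pos hR]))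
  rw [circleIntegral.integral_congr hR.le h1]
  rw [circleIntegral.integral_const_mul]
  rw [circleIntegral.integral_sub hiw hiv, circleInt_inv hR hw, circleInt_inv hR hv]

lemma circleInt_inv_sq {c w : ℂ} {R : ℝ} (hR : 0 ≤ R) :
    (∮ z in C(c, R), (z - w)⁻¹ * (z - w)⁻¹) = 0 := by
  have h1 : (fun z : ℂ => (z - w)⁻¹ * (z - w)⁻¹) = fun z => (z - w) ^ (-2 : ℤ) := by
    funext z
    rw [zpow_neg, (by norm_num : (2 : ℤ) = (2 : ℕ)), zpow_natCast, sq, mul_inv]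
  rw [h1, circleIntegral.integral_sub_zpow_of_ne (by norm_num)]

lemma circleIntegral_finset_sum {E : Type*} [NormedAddCommGroup E] [NormedSpace ℂ E]
    {ι : Type*} (s : Finset ι) (f : ι → ℂ → E) {c : ℂ} {R : ℝ}
    (h : ∀ i ∈ s, CircleIntegrable (f i) c R) :
    (∮ z in C(c, R), ∑ i ∈ s, f i z) = ∑ i ∈ s, ∮ z in C(c, R), f i z := by
  simp only [circleIntegral, Finset.smul_sum]
  exact intervalIntegral.integral_finset_sum fun i hi => (h i hi).out

attribute [local instance] Matrix.normedAddCommGroup Matrix.normedSpace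

open Matrix Finset

/-- Resolvent computation: let `A = Σ λ_l • P_l` with `λ_l` distinct and `P_l` a complete
family of mutually annihilating idempotents, and let `ε > 0` be such that the circle
`|z - λ_k| = ε` separates `λ_k` from the other `λ_l`. Then `z•1 - A` is invertible on that
circle, and the contour integral `(2πi)⁻¹ ∮_{|z-λ_k|=ε} (z-μ)⁻¹ (z•1-A)⁻¹ dz` equals
`(λ_k - μ)⁻¹ • P_k` if `|μ - λ_k| > ε`, and `Σ_{l ≠ k} (μ - λ_l)⁻¹ • P_l` if
`|μ - λ_k| < ε` and `μ` is not one of the `λ_l`. -/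
theorem stmt19 {n : ℕ} (N : ℕ) (hN : 1 ≤ N) (lam : Fin N → ℂ)
    (hdist : Function.Injective lam)
    (P : Fin N → Matrix (Fin n) (Fin n) ℂ)
    (hmul : ∀ l m : Fin N, l ≠ m → P l * P m = 0)
    (hidem : ∀ l : Fin N, P l * P l = P l)
    (hsum : ∑ l : Fin N, P l = 1)
    (A : Matrix (Fin n) (Fin n) ℂ) (hA : A = ∑ l : Fin N, lam l • P l)
    (k : Fin N) (ε : ℝ) (hε : 0 < ε)
    (hsep : ∀ l : Fin N, l ≠ k → ε < ‖lam l - lam k‖) :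
    (∀ z : ℂ, ‖z - lam k‖ = ε →
      IsUnit (z • (1 : Matrix (Fin n) (Fin n) ℂ) - A)) ∧
    (∀ μ : ℂ, ε < ‖μ - lam k‖ →
      (2 * (Real.pi : ℂ) * Complex.I)⁻¹ •
        (∮ z in C(lam k, ε), (z - μ)⁻¹ • (z • (1 : Matrix (Fin n) (Fin n) ℂ) - A)⁻¹) =
      (lam k - μ)⁻¹ • P k) ∧
    (∀ μ : ℂ, ‖μ - lam k‖ < ε → (∀ l : Fin N, μ ≠ lam l) →
      (2 * (Real.pi : ℂ) * Complex.I)⁻¹ •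
        (∮ z in C(lam k, ε), (z - μ)⁻¹ • (z • (1 : Matrix (Fin n) (Fin n) ℂ) - A)⁻¹) =
      ∑ l ∈ univ.erase k, (μ - lam l)⁻¹ • P l) := by
  have h2pi : (2 * (Real.pi : ℂ) * Complex.I) ≠ 0 := by
    simp [Real.pi_ne_zero, Complex.I_ne_zero, Complex.ofReal_ne_zero]
  have hknot : (lam k : ℂ) ∉ Metric.sphere (lam k) ε := by
    simp only [Metric.mem_sphere, dist_self]
    exact fun h => hε.ne' h.symm
  have hkin : lam k ∈ Metric.ball (lam k) ε := Metric.mem_ball_self hε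
  have hlnot : ∀ l, lam l ∉ Metric.sphere (lam k) ε := by
    intro l hl
    rcases eq_or_ne l k with rfl | hlk
    · exact hknot hl
    · have h1 := hsep l hlk
      rw [Metric.mem_sphere, Complex.dist_eq] at hl
      rw [hl] at h1
      exact lt_irrefl _ h1
  have hlout : ∀ l, l ≠ k → lam l ∉ Metric.ball (lam k) ε := by
    intro l hlk hl
    rw [Metric.mem_ball, Complex.dist_eq] at hl
    exact absurd (hsep l hlk) (not_lt.2 hl.le)
  have hzl : ∀ z ∈ Metric.sphere (lam k) ε, ∀ l, z ≠ lam l := by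
    intro z hz l h
    exact hlnot l (h ▸ hz)
  have hPmul : ∀ a b : Fin N → ℂ,
      (∑ l, a l • P l) * (∑ m, b m • P m) = ∑ l, (a l * b l) • P l := by
    intro a b
    rw [Finset.sum_mul_sum]
    refine Finset.sum_congr rfl fun l _ => ?_
    rw [Finset.sum_eq_single l (fun m _ hm => by
        rw [smul_mul_assoc, mul_smul_comm, hmul l m (Ne.symm hm), smul_zero, smul_zero])
      (fun h => absurd (Finset.mem_univ l) h)]
    rw [smul_mul_assoc, mul_smul_comm, hidem, smul_smul]
  have hdecomp : ∀ z : ℂ, z • (1 : Matrix (Fin n) (Fin n) ℂ) - A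
      = ∑ l, (z - lam l) • P l := by
    intro z
    rw [hA, ← hsum, Finset.smul_sum, ← Finset.sum_sub_distrib]
    exact Finset.sum_congr rfl fun l _ => (sub_smul _ _ _).symm
  have hinvform : ∀ z : ℂ, (∀ l, z ≠ lam l) →
      (z • (1 : Matrix (Fin n) (Fin n) ℂ) - A) * (∑ l, (z - lam l)⁻¹ • P l) = 1 := by
    intro z hz
    rw [hdecomp, hPmul]
    have h1 : ∀ l : Fin N, (z - lam l) * (z - lam l)⁻¹ = 1 :=
      fun l => mul_inv_cancel₀ (sub_ne_zero.2 (hz l))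
    simp only [h1, one_smul]
    exact hsum
  have hUnit : ∀ z ∈ Metric.sphere (lam k) ε,
      IsUnit (z • (1 : Matrix (Fin n) (Fin n) ℂ) - A) :=
    fun z hz => (Matrix.isUnit_iff_isUnit_det _).2 (Matrix.isUnit_det_of_right_inverse (hinvform z (hzl z hz)))
  have hmain : ∀ μ : ℂ, μ ∉ Metric.sphere (lam k) ε →
      (∮ z in C(lam k, ε), (z - μ)⁻¹ • (z • (1 : Matrix (Fin n) (Fin n) ℂ) - A)⁻¹)
      = ∑ l, (∮ z in C(lam k, ε), (z - μ)⁻¹ * (z - lam l)⁻¹) • P l := by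
    intro μ hμ
    have hcongr : Set.EqOn
        (fun z => (z - μ)⁻¹ • (z • (1 : Matrix (Fin n) (Fin n) ℂ) - A)⁻¹)
        (fun z => ∑ l, ((z - μ)⁻¹ * (z - lam l)⁻¹) • P l) (Metric.sphere (lam k) ε) := by
      intro z hz
      simp only
      rw [Matrix.inv_eq_right_inv (hinvform z (hzl z hz)), Finset.smul_sum]
      exact Finset.sum_congr rfl fun l _ => (smul_smul _ _ _)
    have hint : ∀ l ∈ (univ : Finset (Fin N)),
        CircleIntegrable (fun z => ((z - μ)⁻¹ * (z - lam l)⁻¹) • P l) (lam k) ε := by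
      intro l _
      refine ContinuousOn.circleIntegrable hε.le ?_
      refine ContinuousOn.smul (f := fun z => (z - μ)⁻¹ * (z - lam l)⁻¹) (g := fun _ => P l) (ContinuousOn.mul ?_ ?_) continuousOn_const
      · exact fun z hz => ((continuousAt_id.sub continuousAt_const).inv₀
          (sub_ne_zero.2 (by rintro rfl; exact hμ hz))).continuousWithinAt
      · exact fun z hz => ((continuousAt_id.sub continuousAt_const).inv₀
          (sub_ne_zero.2 (hzl z hz l))).continuousWithinAt
    rw [circleIntegral.integral_congr hε.le hcongr, circleIntegral_finset_sum _ _ hint]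
    exact Finset.sum_congr rfl fun l _ => circleIntegral.integral_smul_const _ _ _ _
  refine ⟨?_, ?_, ?_⟩
  · intro z hz
    exact hUnit z (by rwa [Metric.mem_sphere, Complex.dist_eq])
  · intro μ hμ
    have hμs : μ ∉ Metric.sphere (lam k) ε := by
      intro h
      rw [Metric.mem_sphere, Complex.dist_eq] at h
      rw [h] at hμ
      exact lt_irrefl _ hμ
    have hμb : μ ∉ Metric.ball (lam k) ε := by
      intro h
      rw [Metric.mem_ball, Complex.dist_eq] at h
      exact absurd hμ (not_lt.2 h.le)
    have hμk : μ ≠ lam k := by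
      rintro rfl
      simp only [sub_self, norm_zero] at hμ
      exact absurd hμ (not_lt.2 hε.le)
    rw [hmain μ hμs]
    rw [Finset.sum_eq_single k (fun l _ hlk => ?_) (fun h => absurd (Finset.mem_univ k) h)]
    · rw [circleInt_key hε hμk hμs (hlnot k), if_neg hμb, if_pos hkin, zero_sub, smul_smul]
      congr 1
      have hmk : (μ - lam k) ≠ 0 := sub_ne_zero.2 hμk
      have hkm : (lam k - μ) ≠ 0 := sub_ne_zero.2 (Ne.symm hμk)
      field_simp
      ring
    · rcases eq_or_ne μ (lam l) with rfl | hne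
      · rw [circleInt_inv_sq hε.le, zero_smul]
      · rw [circleInt_key hε hne hμs (hlnot l), if_neg hμb, if_neg (hlout l hlk),
          sub_self, mul_zero, zero_smul]
  · intro μ hμ hμl
    have hμs : μ ∉ Metric.sphere (lam k) ε := by
      intro h
      rw [Metric.mem_sphere, Complex.dist_eq] at h
      rw [h] at hμ
      exact lt_irrefl _ hμ
    have hμb : μ ∈ Metric.ball (lam k) ε := by
      rwa [Metric.mem_ball, Complex.dist_eq]
    rw [hmain μ hμs, ← Finset.sum_erase_add _ _ (Finset.mem_univ k)]
    have hk0 : (∮ z in C(lam k, ε), (z - μ)⁻¹ * (z - lam k)⁻¹) = 0 := by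
      rw [circleInt_key hε (hμl k) hμs (hlnot k), if_pos hμb, if_pos hkin, sub_self, mul_zero]
    rw [hk0, zero_smul, add_zero, Finset.smul_sum]
    refine Finset.sum_congr rfl fun l hl => ?_
    have hlk := Finset.ne_of_mem_erase hl
    rw [circleInt_key hε (hμl l) hμs (hlnot l), if_pos hμb, if_neg (hlout l hlk),
      sub_zero, smul_smul]
    congr 1
    rw [mul_comm ((μ - lam l)⁻¹) _, ← mul_assoc, inv_mul_cancel₀ h2pi, one_mul]
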